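/- The functor ∇ : Set → HAsm is full and faithful, preserves all finite limits and all finite colimits, and preserves exponentials: for any sets X and Y, the assembly ∇(Y^X) (where Y^X is the set of all functions from X to Y) is an exponential of ∇Y by ∇X in the category HAsm. -/

import Mathlib

open CategoryTheory Encodable Denumerable

namespace Herbrand

/-- Kleene application in Kleene's first pca `K₁`: `e · n`. -/
def kap (e n : ℕ) : Part ℕ := Nat.Partrec.Code.eval (ofNat Nat.Partrec.Code e) n

/-- `kapIn r n S` : `r · n` is defined and its value lies in `S`. -/
def kapIn (r n : ℕ) (S : Set ℕ) : Prop := ∃ v ∈ kap r n, v ∈ S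

/-- The list coded by a natural number (canonical bijection `ℕ ≃ List ℕ`). -/
def toL (n : ℕ) : List ℕ := ofNat (List ℕ) n

/-- The code of a list of natural numbers. -/
def ofL (l : List ℕ) : ℕ := encode l

@[simp] lemma toL_ofL (l : List ℕ) : toL (ofL l) = l := ofNat_encode l

/-- `!A` : the set of codes of lists all of whose entries lie in `A`. -/
def bang (A : Set ℕ) : Set ℕ := {n | ∀ x ∈ toL n, x ∈ A}

/-- `m ⪯ n` : every entry of the list coded by `m` is an entry of the list coded by `n`. -/
def sle (m n : ℕ) : Prop := ∀ x ∈ toL m, x ∈ toL n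

lemma sle_refl (m : ℕ) : sle m m := fun _ hx => hx

lemma sle_trans {m n k : ℕ} (h1 : sle m n) (h2 : sle n k) : sle m k :=
  fun x hx => h2 x (h1 x hx)

/-- `S` is upward closed in `!A`. -/
def UpwardClosedIn (A S : Set ℕ) : Prop :=
  ∀ m ∈ S, ∀ n ∈ bang A, sle m n → n ∈ S

/-- `↑_{!A} S` : the set of `n ∈ !A` with `m ⪯ n` for some `m ∈ S`. -/
def upClo (A S : Set ℕ) : Set ℕ := {n | n ∈ bang A ∧ ∃ m ∈ S, sle m n}

lemma mem_bang_univ (n : ℕ) : n ∈ bang Set.univ := fun x _ => Set.mem_univ x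

/-- From a partial recursive function we get a `K₁`-code for it. -/
theorem exists_kap_eq {f : ℕ →. ℕ} (hf : Nat.Partrec f) : ∃ e, ∀ n, kap e n = f n := by
  obtain ⟨c, hc⟩ := Nat.Partrec.Code.exists_code.mp hf
  exact ⟨encode c, fun n => by simp [kap, hc]⟩


/-- A Herbrand assembly over `K₁`. -/
structure HAsmObj where
  carrier : Type
  real : Set ℕ
  rz : carrier → Set ℕ
  rz_sub : ∀ a, rz a ⊆ bang real
  rz_ne : ∀ a, (rz a).Nonempty
  rz_up : ∀ a, UpwardClosedIn real (rz a)

/-- `r ∈ ℕ` tracks the function `f` between the underlying sets of two Herbrand assemblies. -/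
def Tracks (B A : HAsmObj) (f : B.carrier → A.carrier) (r : ℕ) : Prop :=
  (∀ m ∈ bang B.real, kapIn r m (bang A.real)) ∧
  ∀ b : B.carrier, ∀ m ∈ B.rz b, kapIn r m (A.rz (f b))

/-- A morphism of Herbrand assemblies: a tracked function. -/
structure HHom (B A : HAsmObj) where
  toFun : B.carrier → A.carrier
  tracked : ∃ r, Tracks B A toFun r

theorem HHom.ext' {B A : HAsmObj} {f g : HHom B A} (h : f.toFun = g.toFun) : f = g := by
  cases f; cases g; simpa using h

theorem tracks_id_fun (B A : HAsmObj) (f : B.carrier → A.carrier)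
    (h1 : ∀ m ∈ bang B.real, m ∈ bang A.real)
    (h2 : ∀ b : B.carrier, ∀ m ∈ B.rz b, m ∈ A.rz (f b)) : ∃ r, Tracks B A f r := by
  obtain ⟨e, he⟩ := exists_kap_eq (Nat.Partrec.of_primrec Nat.Primrec.id)
  exact ⟨e, fun m hm => ⟨m, by simp [he], h1 m hm⟩,
    fun b m hm => ⟨m, by simp [he], h2 b m hm⟩⟩

theorem tracked_id (A : HAsmObj) : ∃ r, Tracks A A id r :=
  tracks_id_fun A A id (fun _ h => h) (fun _ _ h => h)

theorem tracked_comp {C B A : HAsmObj} {f : C.carrier → B.carrier} {g : B.carrier → A.carrier}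
    (hf : ∃ r, Tracks C B f r) (hg : ∃ s, Tracks B A g s) : ∃ t, Tracks C A (g ∘ f) t := by
  obtain ⟨r, hr1, hr2⟩ := hf
  obtain ⟨s, hs1, hs2⟩ := hg
  refine ⟨encode (Nat.Partrec.Code.comp (ofNat Nat.Partrec.Code s) (ofNat Nat.Partrec.Code r)),
    ?_, ?_⟩
  · intro m hm
    obtain ⟨v, hv, hv'⟩ := hr1 m hm
    obtain ⟨w, hw, hw'⟩ := hs1 v hv'
    exact ⟨w, by simp [kap, Nat.Partrec.Code.eval]; exact Part.mem_bind_iff.mpr ⟨v, hv, hw⟩, hw'⟩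
  · intro c m hm
    obtain ⟨v, hv, hv'⟩ := hr2 c m hm
    obtain ⟨w, hw, hw'⟩ := hs2 (f c) v hv'
    exact ⟨w, by simp [kap, Nat.Partrec.Code.eval]; exact Part.mem_bind_iff.mpr ⟨v, hv, hw⟩, hw'⟩

/-- The category `HAsm` of Herbrand assemblies over `K₁`. -/
instance : Category HAsmObj where
  Hom B A := HHom B A
  id A := ⟨id, tracked_id A⟩
  comp f g := ⟨g.toFun ∘ f.toFun, tracked_comp f.tracked g.tracked⟩
  id_comp f := HHom.ext' rfl
  comp_id f := HHom.ext' rfl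
  assoc f g h := HHom.ext' rfl


/-- The Herbrand assembly `∇X = (X, ℕ, x ↦ !ℕ)`. -/
def nablaObj (X : Type) : HAsmObj where
  carrier := X
  real := Set.univ
  rz _ := bang Set.univ
  rz_sub _ := fun _ h => h
  rz_ne _ := ⟨0, mem_bang_univ 0⟩
  rz_up _ := fun _ _ n hn _ => hn

/-- The functor `∇ : Set → HAsm`. -/
def Nabla : Type ⥤ HAsmObj where
  obj := nablaObj
  map f := ⟨f, tracks_id_fun _ _ f (fun _ h => h) (fun _ _ h => h)⟩
  map_id _ := HHom.ext' rfl
  map_comp _ _ := HHom.ext' rfl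

/-- The underlying-set functor `Γ : HAsm → Set`. -/
def Gamma : HAsmObj ⥤ Type where
  obj A := A.carrier
  map f := TypeCat.ofHom f.toFun

/-- The realizability structure of the natural numbers object: `ν n = ↑_{!ℕ} {⟨n⟩}`. -/
def nuN (n : ℕ) : Set ℕ := upClo Set.univ {ofL [n]}

/-- The natural numbers object `N = (ℕ, ℕ, ν)` of `HAsm`. -/
def NObj : HAsmObj where
  carrier := ℕ
  real := Set.univ
  rz := nuN
  rz_sub _ := fun _ hm => hm.1
  rz_ne n := ⟨ofL [n], mem_bang_univ _, ofL [n], rfl, sle_refl _⟩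
  rz_up _ := fun m hm k hk hmk => ⟨hk, hm.2.choose, hm.2.choose_spec.1,
    sle_trans hm.2.choose_spec.2 hmk⟩

/-- The terminal object `1 = ({*}, ℕ, * ↦ !ℕ)` of `HAsm`. -/
def oneObj : HAsmObj := nablaObj PUnit

/-- The zero morphism `0 : 1 ⟶ N`. -/
def zeroH : oneObj ⟶ NObj := by
  refine ⟨fun _ => (0 : ℕ), ?_⟩
  obtain ⟨e, he⟩ := exists_kap_eq (Nat.Partrec.of_primrec (Nat.Primrec.const (ofL [0])))
  exact ⟨e, fun m _ => ⟨ofL [0], by simp [he], mem_bang_univ _⟩,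
    fun b m _ => ⟨ofL [0], by simp [he], mem_bang_univ _, ofL [0], rfl, sle_refl _⟩⟩

/-- The successor morphism `s : N ⟶ N`. -/
def succH : NObj ⟶ NObj := by
  refine ⟨(Nat.succ : ℕ → ℕ), ?_⟩
  have hp : Primrec (fun m : ℕ => ofL ((toL m).map Nat.succ)) :=
    Primrec.encode.comp ((Primrec.ofNat (List ℕ)).list_map
      ((Primrec.succ.comp Primrec.snd).to₂))
  obtain ⟨e, he⟩ := exists_kap_eq (Nat.Partrec.of_primrec (Primrec.nat_iff.mp hp))
  refine ⟨e, fun m _ => ⟨ofL ((toL m).map Nat.succ), by simp [he], mem_bang_univ _⟩, ?_⟩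
  rintro (n : ℕ) m hm
  refine ⟨ofL ((toL m).map Nat.succ), by simp [he], mem_bang_univ _, ofL [n + 1], rfl, ?_⟩
  intro x hx
  have hn : n ∈ toL m := hm.2.choose_spec.2 n (by
    have : hm.2.choose = ofL [n] := hm.2.choose_spec.1
    rw [this]; simp)
  have hx' : x = n + 1 := by simpa using hx
  subst hx'
  simp only [toL_ofL, List.mem_map]
  exact ⟨n, hn, rfl⟩


/-! ### Auxiliary lemmas -/

/-- Any function into a `∇`-object is tracked. -/
def homMk {A : HAsmObj} {Y : Type} (f : A.carrier → Y) : A ⟶ Nabla.obj Y :=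
  ⟨f, tracks_id_fun A (nablaObj Y) f (fun m _ => mem_bang_univ m)
    (fun _ m _ => mem_bang_univ m)⟩

@[simp] lemma homMk_toFun {A : HAsmObj} {Y : Type} (f : A.carrier → Y) :
    (homMk f).toFun = f := rfl

/-- Global points of a Herbrand assembly. -/
def ptOf (Z : HAsmObj) (z : Z.carrier) : Nabla.obj PUnit ⟶ Z := by
  refine ⟨fun _ => z, ?_⟩
  obtain ⟨v, hv⟩ := Z.rz_ne z
  obtain ⟨e, he⟩ := exists_kap_eq (Nat.Partrec.of_primrec (Nat.Primrec.const v))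
  exact ⟨e, fun m _ => ⟨v, by simp [he], Z.rz_sub z hv⟩, fun b m _ => ⟨v, by simp [he], hv⟩⟩

@[simp] lemma ptOf_toFun (Z : HAsmObj) (z : Z.carrier) (p : PUnit) :
    (ptOf Z z).toFun p = z := rfl

/-- Characterization of trackability of maps out of `∇X`. -/
lemma tracked_from_nabla {X : Type} {Z : HAsmObj} (f : X → Z.carrier) :
    (∃ r, Tracks (nablaObj X) Z f r) ↔ ∃ v ∈ bang Z.real, ∀ x, v ∈ Z.rz (f x) := by
  constructor
  · rintro ⟨r, h1, h2⟩
    obtain ⟨v, hv, hvZ⟩ := h1 (ofL []) (mem_bang_univ _)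
    refine ⟨v, hvZ, fun x => ?_⟩
    obtain ⟨w, hw, hwz⟩ := h2 x (ofL []) (mem_bang_univ _)
    rwa [Part.mem_unique hv hw]
  · rintro ⟨v, hvZ, hv⟩
    obtain ⟨e, he⟩ := exists_kap_eq (Nat.Partrec.of_primrec (Nat.Primrec.const v))
    exact ⟨e, fun m _ => ⟨v, by simp [he], hvZ⟩, fun b m _ => ⟨v, by simp [he], hv b⟩⟩

open CategoryTheory.Limits

/-- The underlying `Type`-valued cocone of a cocone over `K ⋙ ∇`. -/
def toTypeCocone {J : Type} [SmallCategory J] {K : J ⥤ Type} (s : Cocone (K ⋙ Nabla)) :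
    Cocone K where
  pt := s.pt.carrier
  ι :=
    { app := fun j => TypeCat.ofHom (s.ι.app j).toFun
      naturality := fun i j g => by
        ext x
        exact congrFun (congrArg HHom.toFun (s.ι.naturality g)) x }

/-- `∇` sends colimit cocones of finite diagrams to colimit cocones. -/
noncomputable def nablaIsColimit {J : Type} [SmallCategory J] [FinCategory J] {K : J ⥤ Type}
    {c : Cocone K} (hc : IsColimit c) : IsColimit (Nabla.mapCocone c) := by
  refine ⟨fun s => ⟨hc.desc (toTypeCocone s), ?_⟩, fun s j => ?_, fun s m hm => ?_⟩
  · -- trackability of the descended map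
    show ∃ r, Tracks (nablaObj c.pt) s.pt (hc.desc (toTypeCocone s)) r
    refine (tracked_from_nabla (Z := s.pt) (hc.desc (toTypeCocone s))).mpr ?_
    have hv : ∀ j : J, ∃ v ∈ bang s.pt.real, ∀ x, v ∈ s.pt.rz ((s.ι.app j).toFun x) := by
      intro j
      exact (tracked_from_nabla (X := K.obj j) (Z := s.pt) (s.ι.app j).toFun).mp
        (s.ι.app j).tracked
    choose v hv1 hv2 using hv
    refine ⟨ofL ((Finset.univ : Finset J).toList.map (fun j => toL (v j))).flatten, ?_, ?_⟩
    · intro x hx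
      rw [toL_ofL] at hx
      obtain ⟨l, hl, hxl⟩ := List.mem_flatten.mp hx
      obtain ⟨j, _, rfl⟩ := List.mem_map.mp hl
      exact hv1 j x hxl
    · intro a
      obtain ⟨j, y, hy⟩ := Types.jointly_surjective K hc a
      have hfy : hc.desc (toTypeCocone s) a = (s.ι.app j).toFun y := by
        rw [← hy]; exact types_congr_hom (hc.fac (toTypeCocone s) j) y
      rw [hfy]
      refine s.pt.rz_up _ (v j) (hv2 j y) _ ?_ ?_
      · intro x hx
        rw [toL_ofL] at hx
        obtain ⟨l, hl, hxl⟩ := List.mem_flatten.mp hx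
        obtain ⟨j', _, rfl⟩ := List.mem_map.mp hl
        exact hv1 j' x hxl
      · intro x hx
        rw [toL_ofL]
        exact List.mem_flatten.mpr ⟨toL (v j), List.mem_map.mpr
          ⟨j, Finset.mem_toList.mpr (Finset.mem_univ j), rfl⟩, hx⟩
  · exact HHom.ext' (funext fun y => types_congr_hom (hc.fac (toTypeCocone s) j) y)
  · refine HHom.ext' (funext fun y => types_congr_hom (hc.uniq (toTypeCocone s) (TypeCat.ofHom m.toFun) fun j => ConcreteCategory.hom_ext _ _ fun y => ?_) y)
    exact congrFun (congrArg HHom.toFun (hm j)) y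

/-- The underlying `Type`-valued cone of a cone over `K ⋙ ∇`. -/
def toTypeCone {J : Type} [SmallCategory J] {K : J ⥤ Type} (s : Cone (K ⋙ Nabla)) :
    Cone K where
  pt := s.pt.carrier
  π :=
    { app := fun j => TypeCat.ofHom (s.π.app j).toFun
      naturality := fun i j g => by
        ext x
        exact congrFun (congrArg HHom.toFun (s.π.naturality g)) x }

/-- `∇` sends limit cones to limit cones. -/
noncomputable def nablaIsLimit {J : Type} [SmallCategory J] {K : J ⥤ Type}
    {c : Cone K} (hc : IsLimit c) : IsLimit (Nabla.mapCone c) := by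
  refine ⟨fun s => homMk (hc.lift (toTypeCone s)), fun s j => ?_, fun s m hm => ?_⟩
  · exact HHom.ext' (funext fun y => types_congr_hom (hc.fac (toTypeCone s) j) y)
  · refine HHom.ext' (funext fun y => types_congr_hom (hc.uniq (toTypeCone s) (TypeCat.ofHom m.toFun) fun j => ConcreteCategory.hom_ext _ _ fun y => ?_) y)
    exact congrFun (congrArg HHom.toFun (hm j)) y

/-- Points of a binary-fan limit are determined by their two projections. -/
lemma fan_pt_ext {A B : HAsmObj} {Q : BinaryFan A B} (hQ : IsLimit Q) {q q' : Q.pt.carrier}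
    (h1 : Q.fst.toFun q = Q.fst.toFun q') (h2 : Q.snd.toFun q = Q.snd.toFun q') : q = q' := by
  have h : ptOf Q.pt q = ptOf Q.pt q' := by
    refine hQ.hom_ext fun j => ?_
    rcases j with ⟨j⟩
    cases j
    · exact HHom.ext' (funext fun _ => h1)
    · exact HHom.ext' (funext fun _ => h2)
  exact congrFun (congrArg HHom.toFun h) PUnit.unit

open CategoryTheory.Limits in
/-- `∇` is full and faithful, preserves finite limits and finite colimits,
and preserves exponentials: `∇(Y^X)` is an exponential of `∇Y` by `∇X` in `HAsm`. -/
theorem nabla_full_faithful_preserves :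
    Nabla.Full ∧ Nabla.Faithful ∧
    Nonempty (PreservesFiniteLimits Nabla) ∧
    Nonempty (PreservesFiniteColimits Nabla) ∧
    ∀ (X Y : Type) (P : BinaryFan (Nabla.obj (X → Y)) (Nabla.obj X)) (hP : IsLimit P),
      ∃ ev : P.pt ⟶ Nabla.obj Y,
        ∀ (Z : HAsmObj) (Q : BinaryFan Z (Nabla.obj X)) (_ : IsLimit Q)
          (u : Q.pt ⟶ Nabla.obj Y),
          ∃! t : Z ⟶ Nabla.obj (X → Y),
            hP.lift (BinaryFan.mk (Q.fst ≫ t) Q.snd) ≫ ev = u := by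
  refine ⟨⟨fun {X Y} g => ⟨TypeCat.ofHom g.toFun, HHom.ext' rfl⟩⟩,
    ⟨fun {X Y} f g h => ConcreteCategory.hom_ext _ _ (congrFun (congrArg HHom.toFun h))⟩,
    ⟨⟨fun J _ _ => ⟨fun {K} => ⟨fun {c} hc => ⟨nablaIsLimit hc⟩⟩⟩⟩⟩,
    ⟨⟨fun J _ _ => ⟨fun {K} => ⟨fun {c} hc => ⟨nablaIsColimit hc⟩⟩⟩⟩⟩,
    ?_⟩
  intro X Y P hP
  refine ⟨homMk (fun p => P.fst.toFun p (P.snd.toFun p)), fun Z Q hQ u => ?_⟩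
  let qp : Z.carrier → X → Q.pt.carrier := fun z x =>
    (hQ.lift (BinaryFan.mk (ptOf Z z) (homMk fun _ => x))).toFun PUnit.unit
  have hqp1 : ∀ z x, Q.fst.toFun (qp z x) = z := fun z x =>
    congrFun (congrArg HHom.toFun
      (hQ.fac (BinaryFan.mk (ptOf Z z) (homMk fun _ => x)) ⟨WalkingPair.left⟩)) PUnit.unit
  have hqp2 : ∀ z x, Q.snd.toFun (qp z x) = x := fun z x =>
    congrFun (congrArg HHom.toFun
      (hQ.fac (BinaryFan.mk (ptOf Z z) (homMk fun _ => x)) ⟨WalkingPair.right⟩)) PUnit.unit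
  have hrec : ∀ q : Q.pt.carrier, qp (Q.fst.toFun q) (Q.snd.toFun q) = q := fun q =>
    fan_pt_ext hQ (hqp1 _ _) (hqp2 _ _)
  refine ⟨homMk (fun z x => u.toFun (qp z x)), ?_, ?_⟩
  · apply HHom.ext'
    funext q
    have h1 : P.fst.toFun ((hP.lift (BinaryFan.mk
          (Q.fst ≫ homMk (fun z x => u.toFun (qp z x))) Q.snd)).toFun q) =
        (homMk (fun z x => u.toFun (qp z x))).toFun (Q.fst.toFun q) :=
      congrFun (congrArg HHom.toFun (hP.fac (BinaryFan.mk
        (Q.fst ≫ homMk (fun z x => u.toFun (qp z x))) Q.snd) ⟨WalkingPair.left⟩)) q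
    have h2 : P.snd.toFun ((hP.lift (BinaryFan.mk
          (Q.fst ≫ homMk (fun z x => u.toFun (qp z x))) Q.snd)).toFun q) =
        Q.snd.toFun q :=
      congrFun (congrArg HHom.toFun (hP.fac (BinaryFan.mk
        (Q.fst ≫ homMk (fun z x => u.toFun (qp z x))) Q.snd) ⟨WalkingPair.right⟩)) q
    show P.fst.toFun ((hP.lift (BinaryFan.mk
        (Q.fst ≫ homMk (fun z x => u.toFun (qp z x))) Q.snd)).toFun q)
      (P.snd.toFun ((hP.lift (BinaryFan.mk
        (Q.fst ≫ homMk (fun z x => u.toFun (qp z x))) Q.snd)).toFun q)) = u.toFun q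
    rw [h1, h2]
    show u.toFun (qp (Q.fst.toFun q) (Q.snd.toFun q)) = u.toFun q
    rw [hrec q]
  · intro t' h'
    apply HHom.ext'
    funext z x
    have h1 : P.fst.toFun ((hP.lift (BinaryFan.mk (Q.fst ≫ t') Q.snd)).toFun (qp z x)) =
        t'.toFun (Q.fst.toFun (qp z x)) :=
      congrFun (congrArg HHom.toFun
        (hP.fac (BinaryFan.mk (Q.fst ≫ t') Q.snd) ⟨WalkingPair.left⟩)) (qp z x)
    have h2 : P.snd.toFun ((hP.lift (BinaryFan.mk (Q.fst ≫ t') Q.snd)).toFun (qp z x)) =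
        Q.snd.toFun (qp z x) :=
      congrFun (congrArg HHom.toFun
        (hP.fac (BinaryFan.mk (Q.fst ≫ t') Q.snd) ⟨WalkingPair.right⟩)) (qp z x)
    have hu : P.fst.toFun ((hP.lift (BinaryFan.mk (Q.fst ≫ t') Q.snd)).toFun (qp z x))
        (P.snd.toFun ((hP.lift (BinaryFan.mk (Q.fst ≫ t') Q.snd)).toFun (qp z x))) =
        u.toFun (qp z x) :=
      congrFun (congrArg HHom.toFun h') (qp z x)
    rw [h1, h2, hqp1, hqp2] at hu
    exact hu

end Herbrand
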